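/- arXiv:2412.12854 — 2 statements merged into one kernel-verified Lean document; each statement's English description precedes it below -/
import Mathlib

section
/- For d ≥ 2, as s → ∞, V_d^{-1}(s) = log 2 + (1/(d−1)) log(d−1) + (1/(d−1)) log s + o(1), where V_d^{-1} is the inverse function of V_d on [0,∞). -/
open MeasureTheory intervalIntegral Filter

/-- `V_d(r) = ∫₀^r (sinh t)^{d-1} dt`. -/
noncomputable def V (d : ℕ) (r : ℝ) : ℝ := ∫ t in (0:ℝ)..r, (Real.sinh t) ^ (d - 1)

lemma sinh_int (m : ℕ) : ∀ a b : ℝ, IntervalIntegrable (fun t => Real.sinh t ^ m) volume a b :=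
  fun a b => (Real.continuous_sinh.pow m).intervalIntegrable a b


lemma exph_int (m : ℕ) : ∀ a b : ℝ, IntervalIntegrable (fun t => (Real.exp t / 2) ^ m) volume a b :=
  fun a b => ((Real.continuous_exp.div_const 2).pow m).intervalIntegrable a b


lemma Emv (m : ℕ) (hm : 1 ≤ m) (r : ℝ) :
    ∫ t in (0:ℝ)..r, (Real.exp t / 2) ^ m
      = (Real.exp ((m:ℝ) * r) - 1) / ((m:ℝ) * 2 ^ m) := by
  have hm0 : ((m:ℝ)) ≠ 0 := by positivity
  have h1 : ∀ t : ℝ, (Real.exp t / 2) ^ m = (2:ℝ)⁻¹ ^ m * Real.exp ((m:ℝ) * t) := by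
    intro t
    rw [div_pow, ← Real.exp_nat_mul]
    rw [inv_pow, div_eq_mul_inv, mul_comm]
  simp only [h1]
  rw [intervalIntegral.integral_const_mul, intervalIntegral.integral_comp_mul_left Real.exp hm0,
    mul_zero, integral_exp, Real.exp_zero, smul_eq_mul]
  have h3 : (2:ℝ)⁻¹ ^ m * 2 ^ m = 1 := by rw [← mul_pow]; norm_num
  have h4 : (m:ℝ)⁻¹ * (m:ℝ) = 1 := inv_mul_cancel₀ hm0
  rw [eq_div_iff (by positivity)]
  rw [show (2:ℝ)⁻¹ ^ m * ((m:ℝ)⁻¹ * (Real.exp ((m:ℝ)*r) - 1)) * ((m:ℝ) * 2 ^ m)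
      = ((2:ℝ)⁻¹ ^ m * 2 ^ m) * (((m:ℝ)⁻¹ * (m:ℝ)) * (Real.exp ((m:ℝ)*r) - 1)) from by ring,
    h3, h4]
  ring


lemma ptwise (m : ℕ) (hm : 1 ≤ m) {t r : ℝ} (ht : 0 ≤ t) (htr : t ≤ r) :
    0 ≤ (Real.exp t / 2) ^ m - Real.sinh t ^ m ∧
    (Real.exp t / 2) ^ m - Real.sinh t ^ m
      ≤ (m:ℝ) * (2:ℝ)⁻¹ ^ m * Real.exp ((m:ℝ) * r - r) := by
  have hm' : (1:ℝ) ≤ (m:ℝ) := by exact_mod_cast hm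
  have h0 : 0 ≤ Real.sinh t := Real.sinh_nonneg_iff.mpr ht
  have hle : Real.sinh t ≤ Real.exp t / 2 := by
    rw [Real.sinh_eq]; nlinarith [Real.exp_pos (-t)]
  constructor
  · have := pow_le_pow_left₀ h0 hle m
    linarith
  · set x := Real.exp (-(2*t)) with hxdef
    have hx0 : 0 < x := Real.exp_pos _
    have hx1 : x ≤ 1 := Real.exp_le_one_iff.mpr (by linarith)
    have hxe : Real.exp t * x = Real.exp (-t) := by
      rw [hxdef, ← Real.exp_add]; ring_nf
    have hsinh : Real.sinh t = (Real.exp t / 2) * (1 - x) := by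
      rw [Real.sinh_eq, mul_sub, mul_one,
        show Real.exp t / 2 * x = (Real.exp t * x) / 2 from by ring, hxe]
      ring
    have hbern : 1 - (m:ℝ) * x ≤ (1 - x) ^ m := by
      have := one_add_mul_le_pow (a := -x) (by linarith) m
      calc 1 - (m:ℝ) * x = 1 + (m:ℝ) * (-x) := by ring
        _ ≤ (1 + -x) ^ m := this
        _ = (1 - x) ^ m := by ring_nf
    have hpos : (0:ℝ) ≤ (Real.exp t / 2) ^ m := by positivity
    have hmain : (Real.exp t / 2) ^ m - Real.sinh t ^ m
        ≤ (Real.exp t / 2) ^ m * ((m:ℝ) * x) := by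
      rw [hsinh, mul_pow]
      have h1 : (Real.exp t / 2) ^ m * (1 - (m:ℝ)*x) ≤ (Real.exp t / 2) ^ m * (1-x)^m :=
        mul_le_mul_of_nonneg_left hbern hpos
      nlinarith
    refine hmain.trans ?_
    have heq : (Real.exp t / 2) ^ m * ((m:ℝ) * x)
        = (m:ℝ) * (2:ℝ)⁻¹ ^ m * Real.exp ((m:ℝ) * t - 2 * t) := by
      rw [div_pow, ← Real.exp_nat_mul, hxdef, show (m:ℝ) * t - 2*t = (m:ℝ)*t + -(2*t) from by ring,
        Real.exp_add]
      rw [inv_pow]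
      field_simp
    rw [heq]
    have : Real.exp ((m:ℝ)*t - 2*t) ≤ Real.exp ((m:ℝ)*r - r) := by
      apply Real.exp_le_exp.mpr; nlinarith
    have hc : (0:ℝ) ≤ (m:ℝ) * (2:ℝ)⁻¹ ^ m := by positivity
    exact mul_le_mul_of_nonneg_left this hc


lemma key (m : ℕ) (hm : 1 ≤ m) :
    Tendsto (fun r => (∫ t in (0:ℝ)..r, Real.sinh t ^ m)
      * ((m:ℝ) * 2 ^ m * Real.exp (-((m:ℝ) * r)))) atTop (nhds 1) := by
  have hm' : (1:ℝ) ≤ (m:ℝ) := by exact_mod_cast hm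
  have hm0 : (0:ℝ) < (m:ℝ) := by linarith
  -- upper and lower comparison functions
  have hmr : Tendsto (fun r : ℝ => Real.exp (-((m:ℝ) * r))) atTop (nhds 0) :=
    Real.tendsto_exp_neg_atTop_nhds_zero.comp (tendsto_id.const_mul_atTop hm0)
  have hre : Tendsto (fun r : ℝ => (m:ℝ)^2 * (r * Real.exp (-r))) atTop (nhds 0) := by
    have h1 := Real.tendsto_pow_mul_exp_neg_atTop_nhds_zero 1
    simp only [pow_one] at h1
    simpa using h1.const_mul ((m:ℝ)^2)
  have hu : Tendsto (fun r : ℝ => 1 - Real.exp (-((m:ℝ) * r))) atTop (nhds 1) := by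
    simpa using tendsto_const_nhds.sub hmr
  have hl : Tendsto (fun r : ℝ => 1 - Real.exp (-((m:ℝ) * r)) - (m:ℝ)^2 * (r * Real.exp (-r)))
      atTop (nhds 1) := by
    simpa using hu.sub hre
  have hev : ∀ᶠ r : ℝ in atTop,
      1 - Real.exp (-((m:ℝ) * r)) - (m:ℝ)^2 * (r * Real.exp (-r))
        ≤ (∫ t in (0:ℝ)..r, Real.sinh t ^ m) * ((m:ℝ) * 2 ^ m * Real.exp (-((m:ℝ) * r)))
      ∧ (∫ t in (0:ℝ)..r, Real.sinh t ^ m) * ((m:ℝ) * 2 ^ m * Real.exp (-((m:ℝ) * r)))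
        ≤ 1 - Real.exp (-((m:ℝ) * r)) := by
    filter_upwards [eventually_ge_atTop (0:ℝ)] with r hr
    have hdiff_int : IntervalIntegrable
        (fun t => (Real.exp t / 2) ^ m - Real.sinh t ^ m) volume 0 r :=
      (exph_int m 0 r).sub (sinh_int m 0 r)
    have hsplit : (∫ t in (0:ℝ)..r, Real.sinh t ^ m)
        = (Real.exp ((m:ℝ) * r) - 1) / ((m:ℝ) * 2 ^ m)
          - ∫ t in (0:ℝ)..r, ((Real.exp t / 2) ^ m - Real.sinh t ^ m) := by
      rw [intervalIntegral.integral_sub (exph_int m 0 r) (sinh_int m 0 r), Emv m hm r]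
      ring
    set D := ∫ t in (0:ℝ)..r, ((Real.exp t / 2) ^ m - Real.sinh t ^ m) with hD
    have hD0 : 0 ≤ D := by
      apply intervalIntegral.integral_nonneg hr
      intro u hu
      exact (ptwise m hm hu.1 (hu.2.trans_eq rfl)).1
    have hDle : D ≤ r * ((m:ℝ) * (2:ℝ)⁻¹ ^ m * Real.exp ((m:ℝ) * r - r)) := by
      have h := intervalIntegral.integral_mono_on hr hdiff_int
        (intervalIntegrable_const) (fun u hu => (ptwise m hm hu.1 hu.2).2)
      rw [intervalIntegral.integral_const, smul_eq_mul, sub_zero] at h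
      exact h
    have hexp1 : Real.exp ((m:ℝ)*r) * Real.exp (-((m:ℝ)*r)) = 1 := by
      rw [← Real.exp_add]; simp
    have heq : (∫ t in (0:ℝ)..r, Real.sinh t ^ m) * ((m:ℝ) * 2 ^ m * Real.exp (-((m:ℝ) * r)))
        = (1 - Real.exp (-((m:ℝ)*r))) - ((m:ℝ) * 2 ^ m * Real.exp (-((m:ℝ)*r))) * D := by
      rw [hsplit]
      have hc0 : ((m:ℝ) * 2 ^ m) ≠ 0 := by positivity
      field_simp
      linear_combination hexp1
    rw [heq]
    have hbound : ((m:ℝ) * 2 ^ m * Real.exp (-((m:ℝ)*r))) * D ≤ (m:ℝ)^2 * (r * Real.exp (-r)) := by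
      have hc : (0:ℝ) ≤ (m:ℝ) * 2 ^ m * Real.exp (-((m:ℝ)*r)) := by positivity
      calc ((m:ℝ) * 2 ^ m * Real.exp (-((m:ℝ)*r))) * D
          ≤ ((m:ℝ) * 2 ^ m * Real.exp (-((m:ℝ)*r)))
            * (r * ((m:ℝ) * (2:ℝ)⁻¹ ^ m * Real.exp ((m:ℝ) * r - r))) :=
            mul_le_mul_of_nonneg_left hDle hc
        _ = (m:ℝ)^2 * r * ((2:ℝ)^m * (2:ℝ)⁻¹^m)
            * (Real.exp (-((m:ℝ)*r)) * Real.exp ((m:ℝ)*r - r)) := by ring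
        _ = (m:ℝ)^2 * (r * Real.exp (-r)) := by
            have hee : Real.exp (-((m:ℝ)*r)) * Real.exp ((m:ℝ)*r - r) = Real.exp (-r) := by
              rw [← Real.exp_add]; ring_nf
            rw [hee, ← mul_pow]
            norm_num
            ring
    have hnn : 0 ≤ ((m:ℝ) * 2 ^ m * Real.exp (-((m:ℝ)*r))) * D :=
      mul_nonneg (by positivity) hD0
    constructor <;> linarith
  exact tendsto_of_tendsto_of_tendsto_of_le_of_le' hl hu
    (hev.mono fun r h => h.1) (hev.mono fun r h => h.2)


lemma Vcont (d : ℕ) : Continuous (V d) :=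
  intervalIntegral.continuous_primitive (sinh_int (d-1)) 0


lemma Vmono (d : ℕ) {a b : ℝ} (ha : 0 ≤ a) (hab : a ≤ b) : V d a ≤ V d b := by
  have hsplit : V d a + (∫ t in a..b, Real.sinh t ^ (d-1)) = V d b :=
    intervalIntegral.integral_add_adjacent_intervals (sinh_int (d-1) 0 a) (sinh_int (d-1) a b)
  have hnn : 0 ≤ ∫ t in a..b, Real.sinh t ^ (d-1) := by
    apply intervalIntegral.integral_nonneg hab
    intro u hu
    exact pow_nonneg (Real.sinh_nonneg_iff.mpr (ha.trans hu.1)) _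
  linarith


lemma Wnonneg (d : ℕ) (W : ℝ → ℝ) (hW : ∀ r ≥ (0:ℝ), W (V d r) = r)
    (hW' : ∀ s ≥ (0:ℝ), V d (W s) = s) {s : ℝ} (hs : 0 < s) : 0 ≤ W s := by
  by_contra hx
  push_neg at hx
  set x := W s with hxdef
  have hVx : V d x = s := hW' s hs.le
  have habs : s ≤ V d (-x) := by
    have h1 : |V d x| ≤ ∫ t in x..(0:ℝ), |Real.sinh t ^ (d-1)| := by
      have h0 : V d x = -(∫ t in x..(0:ℝ), Real.sinh t ^ (d-1)) := by
        rw [V, intervalIntegral.integral_symm]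
      rw [h0, abs_neg]
      exact intervalIntegral.abs_integral_le_integral_abs hx.le
    have h2 : (∫ t in x..(0:ℝ), |Real.sinh t ^ (d-1)|) = V d (-x) := by
      have h3 : (∫ u in (0:ℝ)..(-x), |Real.sinh (-u) ^ (d-1)|)
          = ∫ t in x..(0:ℝ), |Real.sinh t ^ (d-1)| := by
        rw [intervalIntegral.integral_comp_neg (fun t => |Real.sinh t ^ (d-1)|)]
        norm_num
      rw [← h3, V]
      apply intervalIntegral.integral_congr
      intro u hu
      have hu0 : 0 ≤ u := by
        have : u ∈ Set.Icc (0:ℝ) (-x) := by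
          rwa [Set.uIcc_of_le (by linarith : (0:ℝ) ≤ -x)] at hu
        exact this.1
      show |Real.sinh (-u) ^ (d-1)| = Real.sinh u ^ (d-1)
      rw [Real.sinh_neg, abs_pow, abs_neg, abs_of_nonneg (Real.sinh_nonneg_iff.mpr hu0)]
    calc s = |V d x| := by rw [hVx, abs_of_pos hs]
      _ ≤ V d (-x) := h1.trans h2.le
  obtain ⟨y, hy, hVy⟩ : ∃ y ∈ Set.Icc (0:ℝ) (-x), V d y = s := by
    have := intermediate_value_Icc (by linarith : (0:ℝ) ≤ -x) (Vcont d).continuousOn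
    have hmem : s ∈ Set.Icc (V d 0) (V d (-x)) := by
      constructor
      · rw [show V d 0 = 0 from intervalIntegral.integral_same]; exact hs.le
      · exact habs
    exact this hmem
  have : W s = y := by rw [← hVy, hW y hy.1]
  rw [← hxdef] at this
  linarith [hy.1, this ▸ hx]


lemma Wtop (d : ℕ) (W : ℝ → ℝ) (hW : ∀ r ≥ (0:ℝ), W (V d r) = r)
    (hW' : ∀ s ≥ (0:ℝ), V d (W s) = s) : Tendsto W atTop atTop := by
  rw [tendsto_atTop_atTop]
  intro b
  refine ⟨max (V d (max b 0) + 1) 1, fun s hs => ?_⟩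
  have hs1 : (1:ℝ) ≤ s := le_trans (le_max_right _ _) hs
  have hs0 : (0:ℝ) < s := by linarith
  have hWs : 0 ≤ W s := Wnonneg d W hW hW' hs0
  have hsV : V d (max b 0) + 1 ≤ s := le_trans (le_max_left _ _) hs
  by_contra hlt
  push_neg at hlt
  have hble : W s < max b 0 := lt_of_lt_of_le hlt (le_max_left b 0)
  have h := Vmono d hWs hble.le
  rw [hW' s hs0.le] at h
  linarith

/-- For `d ≥ 2`, the inverse `W = V_d^{-1}` of `V_d` on `[0,∞)` satisfies
`W(s) = log 2 + (1/(d-1)) log(d-1) + (1/(d-1)) log s + o(1)` as `s → ∞`. -/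
theorem Vinv_asymptotic (d : ℕ) (hd : 2 ≤ d) (W : ℝ → ℝ)
    (hW : ∀ r ≥ (0:ℝ), W (V d r) = r) (hW' : ∀ s ≥ (0:ℝ), V d (W s) = s) :
    Tendsto (fun s : ℝ =>
        W s - (Real.log 2 + (1 / ((d:ℝ) - 1)) * Real.log ((d:ℝ) - 1)
          + (1 / ((d:ℝ) - 1)) * Real.log s))
      atTop (nhds 0) := by
  set m := d - 1 with hmdef
  have hm : 1 ≤ m := by omega
  have hm' : (1:ℝ) ≤ (m:ℝ) := by exact_mod_cast hm
  have hm0 : ((m:ℝ)) ≠ 0 := by linarith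
  have hcast : ((m:ℕ):ℝ) = (d:ℝ) - 1 := by
    rw [hmdef, Nat.cast_sub (by omega : 1 ≤ d)]; norm_num
  have hP := key m hm
  have hVpos : ∀ᶠ r : ℝ in atTop, 0 < ∫ t in (0:ℝ)..r, Real.sinh t ^ m := by
    have hev := hP.eventually (eventually_gt_nhds (by norm_num : (0:ℝ) < 1))
    filter_upwards [hev] with r hr
    have hc : 0 < (m:ℝ) * 2^m * Real.exp (-((m:ℝ)*r)) := by positivity
    by_contra hle
    push_neg at hle
    nlinarith
  have hlog : Tendsto (fun r => Real.log ((∫ t in (0:ℝ)..r, Real.sinh t ^ m)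
      * ((m:ℝ) * 2 ^ m * Real.exp (-((m:ℝ) * r))))) atTop (nhds 0) := by
    have := hP.log one_ne_zero
    simpa using this
  have hg : Tendsto (fun r => r - (Real.log 2 + (1/(m:ℝ)) * Real.log m
      + (1/(m:ℝ)) * Real.log (∫ t in (0:ℝ)..r, Real.sinh t ^ m))) atTop (nhds 0) := by
    have h2 := hlog.const_mul (-(1/(m:ℝ)))
    rw [mul_zero] at h2
    apply Tendsto.congr' _ h2
    filter_upwards [hVpos] with r hVr
    have hc2 : (0:ℝ) < (m:ℝ) * 2^m := by positivity
    rw [Real.log_mul (ne_of_gt hVr) (by positivity),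
      Real.log_mul (ne_of_gt hc2) (Real.exp_ne_zero _),
      Real.log_mul hm0 (by positivity : ((2:ℝ)^m) ≠ 0), Real.log_pow, Real.log_exp]
    field_simp
    ring
  have hcomp := hg.comp (Wtop d W hW hW')
  apply Tendsto.congr' _ hcomp
  filter_upwards [eventually_ge_atTop (0:ℝ)] with s hs
  have hVWs : (∫ t in (0:ℝ)..(W s), Real.sinh t ^ m) = s := hW' s hs
  simp only [Function.comp_apply]
  rw [hVWs, hcast]
end

section
/- For each d ≥ 2 there exists a constant c_d ∈ (0,∞) such that Q^𝔹_d(ρ;0) ≤ c_d (1−ρ)^{(d-1)/2} (1 ∨ |log(1−ρ)|) for all ρ ∈ [0,1). In particular Q^𝔹_d(ρ;0) → 0 as ρ ↗ 1. -/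
open MeasureTheory intervalIntegral Filter

/-- `𝔖_k`: the `k`-dimensional Lebesgue surface volume of the unit `k`-sphere in `ℝ^{k+1}`,
`𝔖_k = 2 π^{(k+1)/2} / Γ((k+1)/2)`. -/
noncomputable def sphereSurf (k : ℕ) : ℝ :=
  2 * Real.pi ^ (((k:ℝ) + 1) / 2) / Real.Gamma (((k:ℝ) + 1) / 2)

/-- `Q^𝔹_d(ρ;0) = (𝔖_{d-2}/𝔖_{d-1}) ∫₀^π ((1−ρ²)/(1+ρ²−2ρcosθ))^{(d-1)/2} (sinθ)^{d-2} dθ`. -/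
noncomputable def Qball (d : ℕ) (ρ : ℝ) : ℝ :=
  (sphereSurf (d - 2) / sphereSurf (d - 1)) *
    ∫ θ in (0:ℝ)..Real.pi,
      ((1 - ρ ^ 2) / (1 + ρ ^ 2 - 2 * ρ * Real.cos θ)) ^ (((d:ℝ) - 1) / 2)
        * (Real.sin θ) ^ (d - 2)

section QballAux
open Real

lemma sphereSurf_aux_pos (k : ℕ) : 0 < sphereSurf k := by
  unfold sphereSurf
  have h : (0:ℝ) < ((k:ℝ)+1)/2 := by positivity
  have := Real.Gamma_pos_of_pos h
  positivity

lemma core_int {ε : ℝ} (hε : 0 < ε) (hε1 : ε ≤ 1) :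
    ∫ θ in (0:ℝ)..π, 1 / Real.sqrt (ε^2 + 1 - Real.cos θ) ≤
      1 + π * Real.log π + π * |Real.log ε| := by
  have hεπ : ε ≤ π := hε1.trans (by linarith [Real.pi_gt_three])
  have hpos : ∀ θ : ℝ, 0 < ε^2 + 1 - Real.cos θ := fun θ => by
    nlinarith [Real.cos_le_one θ, sq_nonneg ε, hε]
  have hcont : Continuous fun θ : ℝ => 1 / Real.sqrt (ε^2 + 1 - Real.cos θ) := by
    apply continuous_const.div
    · exact (Real.continuous_sqrt.comp (by continuity))
    · intro θ
      exact (Real.sqrt_pos.2 (hpos θ)).ne'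
  have hI1 : IntervalIntegrable (fun θ : ℝ => 1 / Real.sqrt (ε^2 + 1 - Real.cos θ))
      volume 0 ε := hcont.intervalIntegrable _ _
  have hI2 : IntervalIntegrable (fun θ : ℝ => 1 / Real.sqrt (ε^2 + 1 - Real.cos θ))
      volume ε π := hcont.intervalIntegrable _ _
  rw [← integral_add_adjacent_intervals hI1 hI2]
  have hb1 : ∫ θ in (0:ℝ)..ε, 1 / Real.sqrt (ε^2 + 1 - Real.cos θ) ≤ 1 := by
    have : ∫ θ in (0:ℝ)..ε, 1 / Real.sqrt (ε^2 + 1 - Real.cos θ) ≤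
        ∫ _ in (0:ℝ)..ε, 1/ε := by
      apply integral_mono_on hε.le hI1 (intervalIntegrable_const)
      intro θ _
      apply one_div_le_one_div_of_le hε
      calc ε = Real.sqrt (ε^2) := (Real.sqrt_sq hε.le).symm
        _ ≤ _ := Real.sqrt_le_sqrt (by nlinarith [Real.cos_le_one θ])
    simpa [mul_one_div, div_self hε.ne', mul_inv_cancel₀ hε.ne'] using this
  have hb2 : ∫ θ in ε..π, 1 / Real.sqrt (ε^2 + 1 - Real.cos θ) ≤
      π * Real.log π + π * |Real.log ε| := by
    have hIh : IntervalIntegrable (fun θ : ℝ => π * (1/θ)) volume ε π := by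
      apply ContinuousOn.intervalIntegrable
      apply continuousOn_const.mul (continuousOn_const.div continuousOn_id ?_)
      intro θ hθ
      rw [Set.uIcc_of_le hεπ] at hθ
      exact (lt_of_lt_of_le hε hθ.1).ne'
    have hmono : ∫ θ in ε..π, 1 / Real.sqrt (ε^2 + 1 - Real.cos θ) ≤
        ∫ θ in ε..π, π * (1/θ) := by
      apply integral_mono_on hεπ hI2 hIh
      intro θ hθ
      have hθ0 : 0 < θ := lt_of_lt_of_le hε hθ.1
      have hθπ : |θ| ≤ π := by rw [abs_of_nonneg hθ0.le]; exact hθ.2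
      have hcos := Real.cos_le_one_sub_mul_cos_sq hθπ
      have hE : θ^2/π^2 ≤ ε^2 + 1 - Real.cos θ := by
        have h2 : θ^2/π^2 ≤ 2/π^2 * θ^2 := by
          rw [div_mul_eq_mul_div]
          gcongr
          linarith [sq_nonneg θ]
        nlinarith [sq_nonneg ε]
      have hsq : Real.sqrt (θ^2/π^2) = θ/π := by
        rw [show θ^2/π^2 = (θ/π)^2 by ring, Real.sqrt_sq (by positivity)]
      have : θ/π ≤ Real.sqrt (ε^2 + 1 - Real.cos θ) := by
        rw [← hsq]; exact Real.sqrt_le_sqrt hE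
      calc 1 / Real.sqrt (ε^2 + 1 - Real.cos θ) ≤ 1 / (θ/π) :=
          one_div_le_one_div_of_le (by positivity) this
        _ = π * (1/θ) := by field_simp
    have hval : ∫ θ in ε..π, π * (1/θ) = π * (Real.log π - Real.log ε) := by
      rw [intervalIntegral.integral_const_mul, integral_one_div, Real.log_div Real.pi_pos.ne' hε.ne']
      rw [Set.uIcc_of_le hεπ]
      intro h; exact absurd h.1 (not_le.2 hε)
    have hlogε : Real.log ε ≤ 0 := Real.log_nonpos hε.le hε1
    have : π * (Real.log π - Real.log ε) = π * Real.log π + π * |Real.log ε| := by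
      rw [abs_of_nonpos hlogε]; ring
    linarith [hmono, hval.le, hval.ge]
  linarith


lemma pointwise_bd {d : ℕ} (hd : 2 ≤ d) {ρ θ : ℝ} (hρ : 1/2 ≤ ρ) (hρ1 : ρ < 1)
    (hθ : θ ∈ Set.Icc (0:ℝ) π) :
    ((1 - ρ ^ 2) / (1 + ρ ^ 2 - 2 * ρ * Real.cos θ)) ^ (((d:ℝ) - 1) / 2)
        * (Real.sin θ) ^ (d - 2) ≤
    (2:ℝ) ^ (((d:ℝ) - 1) / 2) * 2 ^ (((d:ℝ) - 2) / 2) * (1-ρ) ^ (((d:ℝ) - 1) / 2)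
        * (1 / Real.sqrt ((1-ρ)^2 + 1 - Real.cos θ)) := by
  set α : ℝ := ((d:ℝ) - 1) / 2 with hα
  set β : ℝ := ((d:ℝ) - 2) / 2 with hβ
  have hd2 : (2:ℝ) ≤ (d:ℝ) := by exact_mod_cast hd
  have hα0 : 0 ≤ α := by rw [hα]; linarith
  set ε : ℝ := 1 - ρ with hεd
  have hε : 0 < ε := by simp [hεd]; linarith
  set E : ℝ := ε^2 + 1 - Real.cos θ with hEd
  have hcos1 := Real.cos_le_one θ
  have hE : 0 < E := by nlinarith [sq_nonneg ε]
  have hDE : E ≤ 1 + ρ ^ 2 - 2 * ρ * Real.cos θ := by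
    rw [hEd, hεd]; nlinarith
  have hN : 1 - ρ^2 ≤ 2 * ε := by rw [hεd]; nlinarith
  have hN0 : 0 ≤ 1 - ρ^2 := by nlinarith
  have hsin : Real.sin θ ≤ Real.sqrt (2 * E) := by
    have h1 : Real.sin θ = Real.sqrt ((Real.sin θ)^2) :=
      (Real.sqrt_sq (Real.sin_nonneg_of_nonneg_of_le_pi hθ.1 hθ.2)).symm
    rw [h1]
    apply Real.sqrt_le_sqrt
    nlinarith [Real.sin_sq_add_cos_sq θ, Real.neg_one_le_cos θ, sq_nonneg ε]
  have hD : 0 < 1 + ρ ^ 2 - 2 * ρ * Real.cos θ := lt_of_lt_of_le hE hDE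
  have step1 : ((1 - ρ ^ 2) / (1 + ρ ^ 2 - 2 * ρ * Real.cos θ)) ^ α ≤ (2*ε/E) ^ α := by
    apply Real.rpow_le_rpow (div_nonneg hN0 hD.le) _ hα0
    exact div_le_div₀ (by positivity) hN hE hDE
  have step2 : (Real.sin θ) ^ (d-2) ≤ (Real.sqrt (2*E)) ^ (d-2) :=
    pow_le_pow_left₀ (Real.sin_nonneg_of_nonneg_of_le_pi hθ.1 hθ.2) hsin _
  have step3 : (Real.sqrt (2*E)) ^ (d-2) = (2*E) ^ β := by
    rw [Real.sqrt_eq_rpow, ← Real.rpow_natCast ((2*E) ^ ((1:ℝ)/2)) (d-2),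
        ← Real.rpow_mul (by positivity)]
    congr 1
    rw [hβ, Nat.cast_sub hd]
    push_cast; ring
  have key : (2*ε/E) ^ α * (2*E) ^ β =
      2 ^ α * 2 ^ β * ε ^ α * (1 / Real.sqrt E) := by
    rw [Real.div_rpow (by positivity) hE.le, Real.mul_rpow (by norm_num) hε.le,
        Real.mul_rpow (by norm_num) hE.le, Real.sqrt_eq_rpow]
    have hEβ : E ^ β = E ^ α / E ^ ((1:ℝ)/2) := by
      rw [← Real.rpow_sub hE]
      congr 1
      rw [hα, hβ]; ring
    rw [hEβ]
    have h1 : (E:ℝ) ^ α ≠ 0 := (Real.rpow_pos_of_pos hE _).ne'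
    have h2 : (E:ℝ) ^ ((1:ℝ)/2) ≠ 0 := (Real.rpow_pos_of_pos hE _).ne'
    field_simp
  calc ((1 - ρ ^ 2) / (1 + ρ ^ 2 - 2 * ρ * Real.cos θ)) ^ α * (Real.sin θ) ^ (d-2)
      ≤ (2*ε/E) ^ α * (Real.sqrt (2*E)) ^ (d-2) := by
        apply mul_le_mul step1 step2 (pow_nonneg (Real.sin_nonneg_of_nonneg_of_le_pi hθ.1 hθ.2) _) (Real.rpow_nonneg (by positivity) _)
    _ = 2 ^ α * 2 ^ β * ε ^ α * (1 / Real.sqrt E) := by rw [step3, key]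
    _ = 2 ^ α * 2 ^ β * ε ^ α * (1 / Real.sqrt (ε^2 + 1 - Real.cos θ)) := by rw [hEd]



lemma Qball_nonneg (d : ℕ) {ρ : ℝ} (hρ0 : 0 ≤ ρ) (hρ1 : ρ < 1) : 0 ≤ Qball d ρ := by
  unfold Qball
  apply mul_nonneg (div_nonneg (sphereSurf_aux_pos _).le (sphereSurf_aux_pos _).le)
  apply intervalIntegral.integral_nonneg Real.pi_pos.le
  intro θ hθ
  have hD : 0 < 1 + ρ ^ 2 - 2 * ρ * Real.cos θ := by
    nlinarith [Real.cos_le_one θ, Real.neg_one_le_cos θ]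
  have hN : 0 ≤ 1 - ρ ^ 2 := by nlinarith
  exact mul_nonneg (Real.rpow_nonneg (div_nonneg hN hD.le) _)
    (pow_nonneg (Real.sin_nonneg_of_nonneg_of_le_pi hθ.1 hθ.2) _)


set_option maxHeartbeats 1000000 in
lemma Qball_main_bound (d : ℕ) (hd : 2 ≤ d) :
    ∃ c : ℝ, 0 < c ∧ ∀ ρ ∈ Set.Ico (0:ℝ) 1,
      Qball d ρ ≤ c * (1 - ρ) ^ (((d:ℝ) - 1) / 2) * max 1 |Real.log (1 - ρ)| := by
  have hd2 : (2:ℝ) ≤ (d:ℝ) := by exact_mod_cast hd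
  set α : ℝ := ((d:ℝ) - 1) / 2 with hαd
  set β : ℝ := ((d:ℝ) - 2) / 2 with hβd
  have hα0 : 0 ≤ α := by rw [hαd]; linarith
  set S : ℝ := sphereSurf (d - 2) / sphereSurf (d - 1) with hSd
  have hS : 0 < S := div_pos (sphereSurf_aux_pos _) (sphereSurf_aux_pos _)
  set A : ℝ := (2:ℝ) ^ α * 2 ^ β with hAd
  have hA : 0 < A := by positivity
  have hlogπ : 0 ≤ Real.log π := Real.log_nonneg (by linarith [Real.pi_gt_three])
  set K : ℝ := 1 + π * Real.log π + π with hKd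
  have hK : 0 < K := by positivity
  have h8 : (0:ℝ) < (8:ℝ) ^ α := Real.rpow_pos_of_pos (by norm_num) _
  have hc1 : 0 < S * π * (8:ℝ) ^ α := mul_pos (mul_pos hS Real.pi_pos) h8
  have hc2 : 0 < S * A * K := mul_pos (mul_pos hS hA) hK
  refine ⟨S * π * (8:ℝ) ^ α + S * A * K, by linarith, ?_⟩
  intro ρ hρ
  obtain ⟨hρ0, hρ1⟩ := hρ
  set ε : ℝ := 1 - ρ with hεd
  have hε : 0 < ε := by rw [hεd]; linarith
  have hε1 : ε ≤ 1 := by rw [hεd]; linarith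
  have hmax1 : (1:ℝ) ≤ max 1 |Real.log ε| := le_max_left _ _
  have hmax0 : (0:ℝ) ≤ max 1 |Real.log ε| := by linarith
  have hεα : 0 ≤ ε ^ α := Real.rpow_nonneg hε.le _
  -- continuity of the integrand
  have hDpos : ∀ θ : ℝ, 0 < 1 + ρ ^ 2 - 2 * ρ * Real.cos θ := fun θ => by
    nlinarith [Real.cos_le_one θ, Real.neg_one_le_cos θ]
  have hfc : Continuous fun θ : ℝ =>
      ((1 - ρ ^ 2) / (1 + ρ ^ 2 - 2 * ρ * Real.cos θ)) ^ α * (Real.sin θ) ^ (d - 2) := by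
    apply Continuous.mul _ (Real.continuous_sin.pow _)
    apply (Real.continuous_rpow_const hα0).comp
    exact continuous_const.div (continuous_const.sub (continuous_const.mul Real.continuous_cos)) (fun θ => (hDpos θ).ne')
  have hfI : IntervalIntegrable (fun θ : ℝ =>
      ((1 - ρ ^ 2) / (1 + ρ ^ 2 - 2 * ρ * Real.cos θ)) ^ α * (Real.sin θ) ^ (d - 2))
      volume 0 π := hfc.intervalIntegrable _ _
  have hN0 : 0 ≤ 1 - ρ ^ 2 := by nlinarith
  show S * _ ≤ _
  rcases lt_or_ge ρ (1/2) with hhalf | hhalf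
  · -- easy regime : ρ < 1/2, so ε ≥ 1/2
    have hεhalf : (1/2:ℝ) ≤ ε := by rw [hεd]; linarith
    have hpt : ∀ θ ∈ Set.Icc (0:ℝ) π,
        ((1 - ρ ^ 2) / (1 + ρ ^ 2 - 2 * ρ * Real.cos θ)) ^ α * (Real.sin θ) ^ (d - 2)
          ≤ (4:ℝ) ^ α := by
      intro θ hθ
      have h1 : ((1 - ρ ^ 2) / (1 + ρ ^ 2 - 2 * ρ * Real.cos θ)) ^ α ≤ (4:ℝ) ^ α := by
        apply Real.rpow_le_rpow (div_nonneg hN0 (hDpos θ).le) _ hα0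
        rw [div_le_iff₀ (hDpos θ)]
        nlinarith [Real.cos_le_one θ]
      have h2 : (Real.sin θ) ^ (d - 2) ≤ 1 :=
        pow_le_one₀ (Real.sin_nonneg_of_nonneg_of_le_pi hθ.1 hθ.2) (Real.sin_le_one θ)
      calc ((1 - ρ ^ 2) / (1 + ρ ^ 2 - 2 * ρ * Real.cos θ)) ^ α * (Real.sin θ) ^ (d - 2)
          ≤ (4:ℝ) ^ α * 1 := by
            apply mul_le_mul h1 h2
              (pow_nonneg (Real.sin_nonneg_of_nonneg_of_le_pi hθ.1 hθ.2) _) (by positivity)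
        _ = (4:ℝ) ^ α := mul_one _
    have hI : (∫ θ in (0:ℝ)..π,
        ((1 - ρ ^ 2) / (1 + ρ ^ 2 - 2 * ρ * Real.cos θ)) ^ α * (Real.sin θ) ^ (d - 2))
          ≤ π * (4:ℝ) ^ α := by
      calc (∫ θ in (0:ℝ)..π,
          ((1 - ρ ^ 2) / (1 + ρ ^ 2 - 2 * ρ * Real.cos θ)) ^ α * (Real.sin θ) ^ (d - 2))
          ≤ ∫ _ in (0:ℝ)..π, (4:ℝ) ^ α :=
            integral_mono_on Real.pi_pos.le hfI intervalIntegrable_const hpt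
        _ = π * (4:ℝ) ^ α := by simp
    have h4 : (4:ℝ) ^ α = (8:ℝ) ^ α * (1/2:ℝ) ^ α := by
      rw [← Real.mul_rpow (by norm_num) (by norm_num)]; norm_num
    have hhε : (1/2:ℝ) ^ α ≤ ε ^ α := Real.rpow_le_rpow (by norm_num) hεhalf hα0
    calc S * (∫ θ in (0:ℝ)..π,
        ((1 - ρ ^ 2) / (1 + ρ ^ 2 - 2 * ρ * Real.cos θ)) ^ α * (Real.sin θ) ^ (d - 2))
        ≤ S * (π * (4:ℝ) ^ α) := by
          exact mul_le_mul_of_nonneg_left hI hS.le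
      _ = S * π * (8:ℝ) ^ α * (1/2:ℝ) ^ α := by rw [h4]; ring
      _ ≤ S * π * (8:ℝ) ^ α * ε ^ α := by
          apply mul_le_mul_of_nonneg_left hhε hc1.le
      _ = (S * π * (8:ℝ) ^ α) * ε ^ α * 1 := by ring
      _ ≤ (S * π * (8:ℝ) ^ α + S * A * K) * ε ^ α * max 1 |Real.log ε| := by
          apply mul_le_mul _ hmax1 zero_le_one (mul_nonneg (by linarith) hεα)
          apply mul_le_mul_of_nonneg_right _ hεα
          linarith
  · -- hard regime : ρ ≥ 1/2
    have hgc : Continuous fun θ : ℝ => 1 / Real.sqrt (ε^2 + 1 - Real.cos θ) := by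
      apply continuous_const.div (Real.continuous_sqrt.comp (continuous_const.sub Real.continuous_cos))
      intro θ
      have : 0 < ε^2 + 1 - Real.cos θ := by nlinarith [Real.cos_le_one θ, sq_nonneg ε]
      exact (Real.sqrt_pos.2 this).ne'
    have hI : (∫ θ in (0:ℝ)..π,
        ((1 - ρ ^ 2) / (1 + ρ ^ 2 - 2 * ρ * Real.cos θ)) ^ α * (Real.sin θ) ^ (d - 2))
          ≤ A * ε ^ α * (1 + π * Real.log π + π * |Real.log ε|) := by
      calc (∫ θ in (0:ℝ)..π,
          ((1 - ρ ^ 2) / (1 + ρ ^ 2 - 2 * ρ * Real.cos θ)) ^ α * (Real.sin θ) ^ (d - 2))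
          ≤ ∫ θ in (0:ℝ)..π,
              (A * ε ^ α) * (1 / Real.sqrt (ε^2 + 1 - Real.cos θ)) := by
            apply integral_mono_on Real.pi_pos.le hfI
              ((continuous_const.mul hgc).intervalIntegrable _ _)
            intro θ hθ
            have := pointwise_bd hd hhalf hρ1 hθ
            rw [hαd]
            calc ((1 - ρ ^ 2) / (1 + ρ ^ 2 - 2 * ρ * Real.cos θ)) ^ (((d:ℝ)-1)/2)
                * (Real.sin θ) ^ (d - 2)
                ≤ (2:ℝ) ^ (((d:ℝ) - 1) / 2) * 2 ^ (((d:ℝ) - 2) / 2) * (1-ρ) ^ (((d:ℝ) - 1) / 2)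
                  * (1 / Real.sqrt ((1-ρ)^2 + 1 - Real.cos θ)) := this
              _ = (A * ε ^ α) * (1 / Real.sqrt (ε^2 + 1 - Real.cos θ)) := by
                  rw [hAd, hαd, hβd, hεd]
        _ = (A * ε ^ α) * ∫ θ in (0:ℝ)..π, 1 / Real.sqrt (ε^2 + 1 - Real.cos θ) :=
            intervalIntegral.integral_const_mul _ _
        _ ≤ (A * ε ^ α) * (1 + π * Real.log π + π * |Real.log ε|) := by
            apply mul_le_mul_of_nonneg_left (core_int hε hε1) (by positivity)
        _ = A * ε ^ α * (1 + π * Real.log π + π * |Real.log ε|) := by ring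
    have hKbd : 1 + π * Real.log π + π * |Real.log ε| ≤ K * max 1 |Real.log ε| := by
      have h1 : (1 + π * Real.log π) * 1 ≤ (1 + π * Real.log π) * max 1 |Real.log ε| :=
        mul_le_mul_of_nonneg_left hmax1 (by positivity)
      have h2 : π * |Real.log ε| ≤ π * max 1 |Real.log ε| :=
        mul_le_mul_of_nonneg_left (le_max_right _ _) Real.pi_pos.le
      rw [hKd]; nlinarith
    calc S * (∫ θ in (0:ℝ)..π,
        ((1 - ρ ^ 2) / (1 + ρ ^ 2 - 2 * ρ * Real.cos θ)) ^ α * (Real.sin θ) ^ (d - 2))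
        ≤ S * (A * ε ^ α * (1 + π * Real.log π + π * |Real.log ε|)) :=
          mul_le_mul_of_nonneg_left hI hS.le
      _ ≤ S * (A * ε ^ α * (K * max 1 |Real.log ε|)) := by
          apply mul_le_mul_of_nonneg_left _ hS.le
          exact mul_le_mul_of_nonneg_left hKbd (by positivity)
      _ = (S * A * K) * ε ^ α * max 1 |Real.log ε| := by ring
      _ ≤ (S * π * (8:ℝ) ^ α + S * A * K) * ε ^ α * max 1 |Real.log ε| := by
          apply mul_le_mul_of_nonneg_right _ hmax0
          apply mul_le_mul_of_nonneg_right _ hεα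
          linarith


lemma qball_tendsto_aux {α : ℝ} (hα : 0 < α) (c : ℝ) :
    Tendsto (fun ρ : ℝ => c * (1 - ρ) ^ α * max 1 |Real.log (1 - ρ)|)
      (nhdsWithin 1 (Set.Iio 1)) (nhds 0) := by
  have hu : Tendsto (fun t : ℝ => t ^ α * max 1 |Real.log t|)
      (nhdsWithin 0 (Set.Ioi 0)) (nhds 0) := by
    apply squeeze_zero'
    · filter_upwards [self_mem_nhdsWithin] with t ht
      exact mul_nonneg (Real.rpow_nonneg (le_of_lt ht) _) (le_trans zero_le_one (le_max_left _ _))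
    · filter_upwards [self_mem_nhdsWithin] with t ht
      have h1 : 0 ≤ t ^ α := Real.rpow_nonneg (le_of_lt ht) _
      have : max 1 |Real.log t| ≤ 1 + |Real.log t| := by
        apply max_le (by simp [abs_nonneg]) (by simp [abs_nonneg])
      calc t ^ α * max 1 |Real.log t| ≤ t ^ α * (1 + |Real.log t|) :=
            mul_le_mul_of_nonneg_left this h1
        _ = t ^ α + |Real.log t * t ^ α| := by
            rw [abs_mul, abs_of_nonneg h1]; ring
    · have h1 : Tendsto (fun t : ℝ => t ^ α) (nhdsWithin 0 (Set.Ioi 0)) (nhds 0) := by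
        have := (Real.continuous_rpow_const hα.le).tendsto 0
        rw [Real.zero_rpow hα.ne'] at this
        exact this.mono_left nhdsWithin_le_nhds
      have h2 : Tendsto (fun t : ℝ => |Real.log t * t ^ α|)
          (nhdsWithin 0 (Set.Ioi 0)) (nhds 0) := by
        have := (tendsto_log_mul_rpow_nhdsGT_zero hα).abs
        simpa using this
      simpa using h1.add h2
  have hcomp : Tendsto (fun ρ : ℝ => 1 - ρ) (nhdsWithin 1 (Set.Iio 1))
      (nhdsWithin 0 (Set.Ioi 0)) := by
    apply tendsto_nhdsWithin_of_tendsto_nhds_of_eventually_within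
    · have hco : Continuous (fun ρ : ℝ => 1 - ρ) := continuous_const.sub continuous_id
      have h := hco.tendsto (1:ℝ)
      norm_num at h
      exact h.mono_left nhdsWithin_le_nhds
    · filter_upwards [self_mem_nhdsWithin] with ρ hρ
      exact Set.mem_Ioi.2 (by simp at hρ ⊢; linarith)
  have := ((hu.comp hcomp).const_mul c)
  simp only [mul_zero] at this
  apply this.congr
  intro ρ
  simp only [Function.comp_apply]
  ring


end QballAux

/-- For each `d ≥ 2` there is `c_d ∈ (0,∞)` with
`Q^𝔹_d(ρ;0) ≤ c_d (1−ρ)^{(d-1)/2} (1 ∨ |log(1−ρ)|)` on `[0,1)`;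
in particular `Q^𝔹_d(ρ;0) → 0` as `ρ ↗ 1`. -/
theorem Qball_upper_bound (d : ℕ) (hd : 2 ≤ d) :
    (∃ c : ℝ, 0 < c ∧ ∀ ρ ∈ Set.Ico (0:ℝ) 1,
      Qball d ρ ≤ c * (1 - ρ) ^ (((d:ℝ) - 1) / 2) * max 1 |Real.log (1 - ρ)|) ∧
    Tendsto (Qball d) (nhdsWithin 1 (Set.Iio 1)) (nhds 0) := by
  obtain ⟨c, hc, hbd⟩ := Qball_main_bound d hd
  refine ⟨⟨c, hc, hbd⟩, ?_⟩
  have hd2 : (2:ℝ) ≤ (d:ℝ) := by exact_mod_cast hd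
  have hα : 0 < ((d:ℝ) - 1) / 2 := by linarith
  have hmem : ∀ᶠ ρ in nhdsWithin (1:ℝ) (Set.Iio 1), ρ ∈ Set.Ico (0:ℝ) 1 := by
    have h0 : ∀ᶠ ρ in nhdsWithin (1:ℝ) (Set.Iio 1), (0:ℝ) < ρ :=
      eventually_nhdsWithin_of_eventually_nhds (eventually_gt_nhds (by norm_num))
    filter_upwards [self_mem_nhdsWithin, h0] with ρ h1 h2
    exact ⟨h2.le, h1⟩
  apply squeeze_zero'
  · filter_upwards [hmem] with ρ hρ
    exact Qball_nonneg d hρ.1 hρ.2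
  · filter_upwards [hmem] with ρ hρ
    exact hbd ρ hρ
  · exact qball_tendsto_aux hα c
end
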